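/- Let s ∈ {0, 1} and let ξ, V : (0, π) → ℝ be differentiable with ξ > 0. Define h₁(θ) = (1/2)·log sin θ, h₂(θ) = log tan(θ/2), v = V + h₂, V_s = V + 2s·h₁ + s·h₂, and c_s(θ) = 2s·cos²(θ/2) − 1. Then for all θ ∈ (0, π): ξ·(∂_θ V_s)² = ξ·(∂_θ v)² − ξ·c_s²·(∂_θ h₂)² + 2·∂_θ(ξ·c_s·V_s)·∂_θ h₂ − 2·V_s·∂_θ(ξ·c_s)·∂_θ h₂, where ∂_θ h₂ = 1/sin θ. -/

import Mathlib

open Real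

/-- The pointwise identity (7.6) of the paper, relating the area functional to the
quasi-harmonic energy after the substitutions `u = h₁ + U`, `v = h₂ + V` in Hopf
coordinates, together with `∂_θ h₂ = 1/sin θ`. -/
theorem stmt19 (s : ℝ) (hs : s = 0 ∨ s = 1) (ξ V : ℝ → ℝ)
    (hξpos : ∀ θ ∈ Set.Ioo (0 : ℝ) π, 0 < ξ θ)
    (hξ : ∀ θ ∈ Set.Ioo (0 : ℝ) π, DifferentiableAt ℝ ξ θ)
    (hV : ∀ θ ∈ Set.Ioo (0 : ℝ) π, DifferentiableAt ℝ V θ)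
    (h1 h2 v Vs cs : ℝ → ℝ)
    (hh1 : h1 = fun t => 1 / 2 * Real.log (Real.sin t))
    (hh2 : h2 = fun t => Real.log (Real.tan (t / 2)))
    (hv : v = fun t => V t + h2 t)
    (hVs : Vs = fun t => V t + 2 * s * h1 t + s * h2 t)
    (hcs : cs = fun t => 2 * s * Real.cos (t / 2) ^ 2 - 1) :
    ∀ θ ∈ Set.Ioo (0 : ℝ) π,
      (ξ θ * (deriv Vs θ) ^ 2
          = ξ θ * (deriv v θ) ^ 2 - ξ θ * cs θ ^ 2 * (deriv h2 θ) ^ 2 +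
            2 * deriv (fun t => ξ t * cs t * Vs t) θ * deriv h2 θ -
            2 * Vs θ * deriv (fun t => ξ t * cs t) θ * deriv h2 θ) ∧
      deriv h2 θ = 1 / Real.sin θ := by
  subst hh1 hh2 hv hVs hcs
  intro θ hθ
  obtain ⟨hθ0, hθπ⟩ := hθ
  have hsin : 0 < Real.sin θ := Real.sin_pos_of_pos_of_lt_pi hθ0 hθπ
  have hθ2 : 0 < θ / 2 := by linarith
  have hθ2' : θ / 2 < π / 2 := by linarith
  have hcos2 : 0 < Real.cos (θ / 2) :=
    Real.cos_pos_of_mem_Ioo ⟨by linarith [Real.pi_pos], hθ2'⟩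
  have hsin2 : 0 < Real.sin (θ / 2) :=
    Real.sin_pos_of_pos_of_lt_pi hθ2 (by linarith [Real.pi_pos])
  have htanpos : 0 < Real.tan (θ / 2) := by
    rw [Real.tan_eq_sin_div_cos]; positivity
  have hsin_eq : Real.sin θ = 2 * Real.sin (θ / 2) * Real.cos (θ / 2) := by
    have := Real.sin_two_mul (θ / 2)
    rw [show 2 * (θ / 2) = θ by ring] at this
    linarith
  have hcos_eq : Real.cos θ = 2 * Real.cos (θ / 2) ^ 2 - 1 := by
    have := Real.cos_two_mul (θ / 2)
    rw [show 2 * (θ / 2) = θ by ring] at this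
    linarith
  have hhalf : HasDerivAt (fun t : ℝ => t / 2) (1 / 2) θ := (hasDerivAt_id θ).div_const 2
  have htand : HasDerivAt (fun t => Real.tan (t / 2)) (1 / Real.cos (θ / 2) ^ 2 * (1 / 2)) θ :=
    by have := (Real.hasDerivAt_tan hcos2.ne').comp θ hhalf; exact this
  have hd2 : HasDerivAt (fun t => Real.log (Real.tan (t / 2))) (1 / Real.sin θ) θ := by
    have h := htand.log htanpos.ne'
    convert h using 1
    rw [Real.tan_eq_sin_div_cos, hsin_eq]
    field_simp
  have hd1 : HasDerivAt (fun t => 1 / 2 * Real.log (Real.sin t))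
      (1 / 2 * (Real.cos θ / Real.sin θ)) θ :=
    ((Real.hasDerivAt_sin θ).log hsin.ne').const_mul (1 / 2)
  have hdc : HasDerivAt (fun t => Real.cos (t / 2)) (-Real.sin (θ / 2) * (1 / 2)) θ :=
    by have := (Real.hasDerivAt_cos (θ / 2)).comp θ hhalf; exact this
  have hdcs : HasDerivAt (fun t => 2 * s * Real.cos (t / 2) ^ 2 - 1)
      (2 * s * ((2 : ℕ) * Real.cos (θ / 2) ^ (2 - 1) * (-Real.sin (θ / 2) * (1 / 2)))) θ :=
    ((hdc.pow 2).const_mul (2 * s)).sub_const 1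
  have hdV : HasDerivAt V (deriv V θ) θ := (hV θ ⟨hθ0, hθπ⟩).hasDerivAt
  have hdξ : HasDerivAt ξ (deriv ξ θ) θ := (hξ θ ⟨hθ0, hθπ⟩).hasDerivAt
  have hdVs : HasDerivAt (fun t => V t + 2 * s * (1 / 2 * Real.log (Real.sin t)) +
      s * Real.log (Real.tan (t / 2)))
      (deriv V θ + 2 * s * (1 / 2 * (Real.cos θ / Real.sin θ)) + s * (1 / Real.sin θ)) θ :=
    (hdV.add (hd1.const_mul (2 * s))).add (hd2.const_mul s)
  have hdv : HasDerivAt (fun t => V t + Real.log (Real.tan (t / 2)))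
      (deriv V θ + 1 / Real.sin θ) θ := hdV.add hd2
  have hdξc : HasDerivAt (fun t => ξ t * (2 * s * Real.cos (t / 2) ^ 2 - 1))
      (deriv ξ θ * (2 * s * Real.cos (θ / 2) ^ 2 - 1) +
        ξ θ * (2 * s * ((2 : ℕ) * Real.cos (θ / 2) ^ (2 - 1) * (-Real.sin (θ / 2) * (1 / 2))))) θ :=
    hdξ.mul hdcs
  have hdprod : HasDerivAt (fun t => ξ t * (2 * s * Real.cos (t / 2) ^ 2 - 1) * (V t + 2 * s * (1 / 2 * Real.log (Real.sin t)) + s * Real.log (Real.tan (t / 2)))) _ θ := hdξc.mul hdVs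
  have key : deriv V θ + 2 * s * (1 / 2 * (Real.cos θ / Real.sin θ)) + s * (1 / Real.sin θ)
      = (deriv V θ + 1 / Real.sin θ) +
        (2 * s * Real.cos (θ / 2) ^ 2 - 1) * (1 / Real.sin θ) := by
    rw [hcos_eq]
    field_simp
    ring
  refine ⟨?_, hd2.deriv⟩
  rw [hdVs.deriv, hdv.deriv, hd2.deriv, hdprod.deriv, hdξc.deriv, key]
  ring
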